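/- For any polar code of block length N = 2^n with n ≥ 3 (i.e., length 8 or more), the girth of its Tanner graph (obtained from the normal realization of the encoding graph by adding check nodes) is at least 12. -/

import Mathlib

/-- Variable nodes of the `n`-stage normal realization of a length-`2^n` polar
code: stage `0` holds the input bits `u`, stage `n` the code-bits `x`. -/
abbrev PVar (n : ℕ) := Fin (n + 1) × Fin (2 ^ n)

/-- Check nodes: one per encoding equation of each stage. -/
abbrev PChk (n : ℕ) := Fin n × Fin (2 ^ n)

/-- The butterfly partner of index `j` at stage `t` (flip bit `t`). -/
def xorIdx {n : ℕ} (t : Fin n) (j : Fin (2 ^ n)) : Fin (2 ^ n) :=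
  ⟨(j : ℕ) ^^^ 2 ^ (t : ℕ),
    Nat.xor_lt_two_pow j.isLt (Nat.pow_lt_pow_right one_lt_two t.isLt)⟩

/-- Adjacency between a variable node `p` and the check node `c = (t, j)`,
encoding the stage-`t` butterfly equation
`v_{t+1}(j) = v_t(j) + v_t(j ⊕ 2^t)` when bit `t` of `j` is `0` (degree-3
check), and `v_{t+1}(j) = v_t(j)` otherwise (degree-2 check). -/
def varCheckAdj (n : ℕ) (p : PVar n) (c : PChk n) : Prop :=
  p = (c.1.castSucc, c.2) ∨ p = (c.1.succ, c.2) ∨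
    ((c.2 : ℕ).testBit (c.1 : ℕ) = false ∧ p = (c.1.castSucc, xorIdx c.1 c.2))

/-- The Tanner graph of the polar code of length `2^n`, obtained from the
normal realization of the encoding graph by adding check nodes. -/
def tanner (n : ℕ) : SimpleGraph (PVar n ⊕ PChk n) where
  Adj a b :=
    match a, b with
    | Sum.inl p, Sum.inr c => varCheckAdj n p c
    | Sum.inr c, Sum.inl p => varCheckAdj n p c
    | _, _ => False
  symm := by
    constructor
    intro a b h
    cases a <;> cases b <;> simp_all
  loopless := by
    constructor
    intro a
    cases a <;> simp

open SimpleGraph Walk Sum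

/-- Every vertex of a cycle has two distinct neighbours along the cycle. -/
lemma cycle_two_nbrs {V' : Type*} {G : SimpleGraph V'} [DecidableEq V'] {a v : V'} {w : G.Walk a a}
    (hc : w.IsCycle) (hv : v ∈ w.support) :
    ∃ u₁ u₂, u₁ ≠ u₂ ∧ G.Adj v u₁ ∧ G.Adj v u₂ ∧ s(v, u₁) ∈ w.edges ∧ s(v, u₂) ∈ w.edges := by
  have hrot : (w.rotate v hv).IsCycle := hc.rotate hv
  have hmem : ∀ e, e ∈ (w.rotate v hv).edges → e ∈ w.edges := fun e he =>
    ((w.rotate_edges v hv).mem_iff).mp he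
  revert hrot hmem
  generalize w.rotate v hv = w'
  intro hrot hmem
  cases w' with
  | nil => exact (hrot.ne_nil rfl).elim
  | @cons _ b _ h q =>
    have h3 : 3 ≤ (Walk.cons h q).length := hrot.three_le_length
    obtain ⟨u₂, h2, r, hqr⟩ : ∃ (u₂ : V') (h2 : G.Adj v u₂) (r : G.Walk u₂ b), q.reverse = Walk.cons h2 r := by
      cases hrev : q.reverse with
      | nil =>
        have : q.length = 0 := by
          have := congrArg Walk.length hrev
          simpa using this
        simp [Walk.length_cons, this] at h3
      | cons h2 r => exact ⟨_, h2, r, rfl⟩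
    have hpq : q.IsPath := ((Walk.cons_isCycle_iff q h).mp hrot).1
    refine ⟨b, u₂, ?_, h, h2, ?_, ?_⟩
    · rintro rfl
      have hrev : q.reverse.IsPath := hpq.reverse
      rw [hqr] at hrev
      have hr : r = Walk.nil := (Walk.isPath_iff_eq_nil (p := r)).mp hrev.of_cons
      have : q.length = 1 := by
        have := congrArg Walk.length hqr
        simpa [hr] using this
      simp [Walk.length_cons, this] at h3
    · exact hmem _ (by rw [Walk.edges_cons]; exact List.mem_cons_self)
    · apply hmem
      have h1 : s(v, u₂) ∈ q.reverse.edges := by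
        rw [hqr, Walk.edges_cons]; exact List.mem_cons_self
      rw [Walk.edges_reverse, List.mem_reverse] at h1
      rw [Walk.edges_cons]
      exact List.mem_cons.mpr (Or.inr h1)

/-- Telescoping parity along a walk. -/
lemma countP_change {V' : Type*} {G : SimpleGraph V'} (f : V' → ZMod 2) :
    ∀ {u v : V'} (p : G.Walk u v),
      (↑(p.darts.countP (fun d => decide (f d.toProd.1 ≠ f d.toProd.2))) : ZMod 2) = f u + f v := by
  intro u v p
  induction p with
  | nil => simp [CharTwo.add_self_eq_zero]
  | @cons u u' v h q ih =>
    rw [Walk.darts_cons, List.countP_cons]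
    push_cast
    rw [ih]
    by_cases hfe : f u = f u'
    · simp [hfe]
    · have h1 : (decide (f u ≠ f u') : Bool) = true := by simpa using hfe
      have h2 : f u' + 1 = f u := (by decide : ∀ x y : ZMod 2, x ≠ y → y + 1 = x) _ _ hfe
      simp only [h1, if_true]
      push_cast
      rw [← h2]; ring

lemma adj_cases {n : ℕ} {x y : PVar n ⊕ PChk n} (h : (tanner n).Adj x y) :
    (∃ p c, x = Sum.inl p ∧ y = Sum.inr c ∧ varCheckAdj n p c) ∨
    (∃ p c, x = Sum.inr c ∧ y = Sum.inl p ∧ varCheckAdj n p c) := by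
  cases x with
  | inl p =>
    cases y with
    | inl p' => exact (h : False).elim
    | inr c => exact Or.inl ⟨p, c, rfl, rfl, h⟩
  | inr c =>
    cases y with
    | inl p => exact Or.inr ⟨p, c, rfl, rfl, h⟩
    | inr c' => exact (h : False).elim

lemma vca_elim {n : ℕ} {p : PVar n} {c : PChk n} (h : varCheckAdj n p c) :
    (p.1 = c.1.castSucc ∧ p.2 = c.2) ∨ (p.1 = c.1.succ ∧ p.2 = c.2) ∨
    ((c.2 : ℕ).testBit (c.1 : ℕ) = false ∧ p.1 = c.1.castSucc ∧ p.2 = xorIdx c.1 c.2) := by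
  rcases h with h | h | ⟨hb, h⟩
  · exact Or.inl ⟨by rw [h], by rw [h]⟩
  · exact Or.inr (Or.inl ⟨by rw [h], by rw [h]⟩)
  · exact Or.inr (Or.inr ⟨hb, by rw [h], by rw [h]⟩)

lemma xorIdx_val {n : ℕ} (t : Fin n) (j : Fin (2^n)) : ((xorIdx t j : Fin (2^n)) : ℕ) = (j : ℕ) ^^^ 2 ^ (t : ℕ) := rfl

lemma testBit_xor_pow (T m : ℕ) : (m ^^^ 2^T).testBit T = ! m.testBit T := by
  rw [Nat.testBit_xor, Nat.testBit_two_pow]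
  simp [Bool.xor_comm]

lemma count_right_le {n : ℕ} : ∀ {u v : PVar n ⊕ PChk n} (p : (tanner n).Walk u v),
    2 * p.support.countP (fun x => x.isRight) ≤ p.length + (if u.isRight then 2 else 1) := by
  intro u v p
  induction p with
  | nil =>
    rename_i x
    rcases x with p | χ <;> simp
  | @cons u u' v h q ih =>
    rw [SimpleGraph.Walk.support_cons, List.countP_cons, SimpleGraph.Walk.length_cons]
    have hop : u.isRight = ! u'.isRight := by
      rcases adj_cases h with ⟨p', c, hx, hy, _⟩ | ⟨p', c, hx, hy, _⟩ <;> subst hx <;> subst hy <;> simp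
    have hu' : u'.isRight = ! u.isRight := by rw [hop, Bool.not_not]
    cases hu : u.isRight <;> rw [hu] at hu' <;> simp only [hu', hu] at ih ⊢ <;> simp at ih ⊢ <;> omega

lemma no_short_cycle {n : ℕ} {a : PVar n ⊕ PChk n} {w : (tanner n).Walk a a}
    (hc : w.IsCycle) : 12 ≤ w.length := by
  by_contra hlt
  push_neg at hlt
  have h3 : 3 ≤ w.length := hc.three_le_length
  -- even length
  have hlen10 : w.length ≤ 10 := by
    have hside : (↑(w.darts.countP (fun d => decide
        ((Sum.elim (fun _ => (0 : ZMod 2)) (fun _ => 1) d.toProd.1) ≠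
        (Sum.elim (fun _ => (0 : ZMod 2)) (fun _ => 1) d.toProd.2)))) : ZMod 2) = 0 := by
      rw [countP_change]; exact CharTwo.add_self_eq_zero _
    have hall : w.darts.countP (fun d => decide
        ((Sum.elim (fun _ => (0 : ZMod 2)) (fun _ => 1) d.toProd.1) ≠
        (Sum.elim (fun _ => (0 : ZMod 2)) (fun _ => 1) d.toProd.2))) = w.length := by
      rw [← Walk.length_darts w, List.countP_eq_length]
      intro d hd
      rcases adj_cases d.adj with ⟨p, c, hx, hy, _⟩ | ⟨p, c, hx, hy, _⟩ <;>
        rw [hx, hy] <;> simp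
    rw [hall] at hside
    have : 2 ∣ w.length := by rwa [ZMod.natCast_eq_zero_iff] at hside
    omega
  -- some check node is on the cycle
  obtain ⟨χ₀, hχ₀⟩ : ∃ χ : PChk n, Sum.inr χ ∈ w.support := by
    obtain ⟨u₁, u₂, hne, hadj1, hadj2, he1, he2⟩ := cycle_two_nbrs hc (w.start_mem_support)
    rcases adj_cases hadj1 with ⟨p, c, hx, hy, _⟩ | ⟨p, c, hx, hy, _⟩
    · exact ⟨c, by rw [← hy]; exact Walk.snd_mem_support_of_mem_edges w he1⟩
    · exact ⟨c, by rw [← hx]; exact w.start_mem_support⟩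
  -- the maximal check stage on the cycle
  classical
  set cs : Finset ℕ := (w.support.filterMap
      (Sum.elim (fun _ => (none : Option ℕ)) (fun χ : PChk n => some ((χ.1 : ℕ))))).toFinset with hcs
  have hcs_mem : ∀ m : ℕ, m ∈ cs ↔ ∃ χ : PChk n, Sum.inr χ ∈ w.support ∧ (χ.1 : ℕ) = m := by
    intro m
    rw [hcs, List.mem_toFinset, List.mem_filterMap]
    constructor
    · rintro ⟨x, hx, hfx⟩
      cases x with
      | inl p => simp at hfx
      | inr χ => exact ⟨χ, hx, by simpa using hfx⟩
    · rintro ⟨χ, hχ, rfl⟩; exact ⟨Sum.inr χ, hχ, rfl⟩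
  have hnecs : cs.Nonempty := ⟨(χ₀.1 : ℕ), (hcs_mem _).mpr ⟨χ₀, hχ₀, rfl⟩⟩
  set T : ℕ := cs.max' hnecs with hT
  have hTle : ∀ χ : PChk n, Sum.inr χ ∈ w.support → (χ.1 : ℕ) ≤ T :=
    fun χ hχ => Finset.le_max' _ _ ((hcs_mem _).mpr ⟨χ, hχ, rfl⟩)
  obtain ⟨χm, hχm, hχmT⟩ : ∃ χ : PChk n, Sum.inr χ ∈ w.support ∧ (χ.1 : ℕ) = T :=
    (hcs_mem T).mp (cs.max'_mem hnecs)
  -- no variable of stage T+1 on the cycle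
  have notop : ∀ p : PVar n, Sum.inl p ∈ w.support → (p.1 : ℕ) ≠ T + 1 := by
    intro p hp hpT
    obtain ⟨u₁, u₂, hne12, hadj1, hadj2, he1, he2⟩ := cycle_two_nbrs hc hp
    have key : ∀ u, (tanner n).Adj (Sum.inl p) u → s(Sum.inl p, u) ∈ w.edges →
        ∃ t : Fin n, u = Sum.inr (t, p.2) := by
      intro u hadj he
      rcases adj_cases hadj with ⟨p', c, hx, hy, hv⟩ | ⟨p', c, hx, hy, hv⟩
      · obtain rfl : p = p' := Sum.inl.inj hx
        have hcsupp : Sum.inr c ∈ w.support := by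
          rw [← hy]; exact Walk.snd_mem_support_of_mem_edges w he
        have hcle := hTle c hcsupp
        rcases vca_elim hv with ⟨h1, h2⟩ | ⟨h1, h2⟩ | ⟨hb, h1, h2⟩
        · exfalso
          have := congrArg Fin.val h1
          rw [Fin.coe_castSucc] at this
          omega
        · refine ⟨c.1, ?_⟩
          rw [hy]
          have hcc : c = (c.1, p.2) := by rw [h2]
          rw [← hcc]
        · exfalso
          have := congrArg Fin.val h1
          rw [Fin.coe_castSucc] at this
          omega
      · exact absurd hx (by simp)
    obtain ⟨t₁, hu₁⟩ := key u₁ hadj1 he1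
    obtain ⟨t₂, hu₂⟩ := key u₂ hadj2 he2
    have hadj1' := hadj1; rw [hu₁] at hadj1'
    have hadj2' := hadj2; rw [hu₂] at hadj2'
    have hm₁ : (t₁ : ℕ) ≤ T := hTle (t₁, p.2)
      (by rw [← hu₁]; exact Walk.snd_mem_support_of_mem_edges w he1)
    have hm₂ : (t₂ : ℕ) ≤ T := hTle (t₂, p.2)
      (by rw [← hu₂]; exact Walk.snd_mem_support_of_mem_edges w he2)
    have ht : ∀ t : Fin n, (tanner n).Adj (Sum.inl p) (Sum.inr (t, p.2)) → (t : ℕ) ≤ T →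
        (t : ℕ) = T := by
      intro t hadj hle
      have hv : varCheckAdj n p (t, p.2) := hadj
      rcases vca_elim hv with ⟨h1, _⟩ | ⟨h1, _⟩ | ⟨_, h1, _⟩ <;>
          have := congrArg Fin.val h1 <;>
          simp only [Fin.coe_castSucc, Fin.val_succ] at this <;>
        omega
    have htt : t₁ = t₂ := Fin.ext (by rw [ht t₁ hadj1' hm₁, ht t₂ hadj2' hm₂])
    exact hne12 (by rw [hu₁, hu₂, htt])
  -- structure of stage-T checks on the cycle
  have chk : ∀ χ : PChk n, Sum.inr χ ∈ w.support → (χ.1 : ℕ) = T →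
      (χ.2 : ℕ).testBit T = false ∧
      Sum.inl (χ.1.castSucc, χ.2) ∈ w.support ∧
      Sum.inl (χ.1.castSucc, xorIdx χ.1 χ.2) ∈ w.support ∧
      s(Sum.inr χ, Sum.inl (χ.1.castSucc, xorIdx χ.1 χ.2)) ∈ w.edges := by
    intro χ hχ hχT
    obtain ⟨u₁, u₂, hne12, hadj1, hadj2, he1, he2⟩ := cycle_two_nbrs hc hχ
    have key : ∀ u, (tanner n).Adj (Sum.inr χ) u → s(Sum.inr χ, u) ∈ w.edges →
        (u = Sum.inl (χ.1.castSucc, χ.2)) ∨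
        ((χ.2 : ℕ).testBit (χ.1 : ℕ) = false ∧ u = Sum.inl (χ.1.castSucc, xorIdx χ.1 χ.2)) := by
      intro u hadj he
      rcases adj_cases hadj with ⟨p, c, hx, hy, hv⟩ | ⟨p, c, hx, hy, hv⟩
      · exact absurd hx (by simp)
      · obtain rfl : χ = c := Sum.inr.inj hx
        have hpsupp : Sum.inl p ∈ w.support := by
          rw [← hy]; exact Walk.snd_mem_support_of_mem_edges w he
        rcases vca_elim hv with ⟨h1, h2⟩ | ⟨h1, h2⟩ | ⟨hb, h1, h2⟩
        · left; rw [hy]; exact congrArg _ (Prod.ext h1 h2)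
        · exfalso
          refine notop p hpsupp ?_
          have := congrArg Fin.val h1
          rw [Fin.val_succ] at this
          omega
        · right; exact ⟨hb, by rw [hy]; exact congrArg _ (Prod.ext h1 h2)⟩
    have hbT : ∀ h : (χ.2 : ℕ).testBit (χ.1 : ℕ) = false, (χ.2 : ℕ).testBit T = false := by
      intro h; rwa [hχT] at h
    rcases key u₁ hadj1 he1 with h₁ | ⟨hb1, h₁⟩ <;> rcases key u₂ hadj2 he2 with h₂ | ⟨hb2, h₂⟩
    · exact absurd (h₁.trans h₂.symm) hne12
    · refine ⟨hbT hb2, ?_, ?_, ?_⟩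
      · rw [← h₁]; exact Walk.snd_mem_support_of_mem_edges w he1
      · rw [← h₂]; exact Walk.snd_mem_support_of_mem_edges w he2
      · rw [← h₂]; exact he2
    · refine ⟨hbT hb1, ?_, ?_, ?_⟩
      · rw [← h₂]; exact Walk.snd_mem_support_of_mem_edges w he2
      · rw [← h₁]; exact Walk.snd_mem_support_of_mem_edges w he1
      · rw [← h₁]; exact he1
    · exact absurd (h₁.trans h₂.symm) hne12
  -- every stage-T variable on the cycle has a stage-(T-1) check neighbour on the cycle
  have var : ∀ (S : Fin (n+1)) (j : Fin (2^n)), Sum.inl (S, j) ∈ w.support → (S : ℕ) = T →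
      ∃ t : Fin n, (t : ℕ) + 1 = T ∧ Sum.inr (t, j) ∈ w.support := by
    intro S j hm hST
    obtain ⟨u₁, u₂, hne12, hadj1, hadj2, he1, he2⟩ := cycle_two_nbrs hc hm
    have key : ∀ u, (tanner n).Adj (Sum.inl (S, j)) u → s(Sum.inl (S, j), u) ∈ w.edges →
        (∃ t : Fin n, (t : ℕ) + 1 = T ∧ Sum.inr (t, j) ∈ w.support) ∨
        (∃ c : PChk n, u = Sum.inr c ∧ Sum.inr c ∈ w.support ∧ (c.1 : ℕ) = T ∧
          (c.2 = j ∨ (((c.2 : ℕ) = (j : ℕ) ^^^ 2 ^ T) ∧ (j : ℕ).testBit T = true))) := by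
      intro u hadj he
      rcases adj_cases hadj with ⟨p, c, hx, hy, hv⟩ | ⟨p, c, hx, hy, hv⟩
      · obtain rfl : (S, j) = p := Sum.inl.inj hx
        have hcsupp : Sum.inr c ∈ w.support := by
          rw [← hy]; exact Walk.snd_mem_support_of_mem_edges w he
        rcases vca_elim hv with ⟨h1, h2⟩ | ⟨h1, h2⟩ | ⟨hb, h1, h2⟩
        · right
          refine ⟨c, hy, hcsupp, ?_, Or.inl h2.symm⟩
          have := congrArg Fin.val h1
          rw [Fin.coe_castSucc] at this
          simp only at this
          omega
        · left
          refine ⟨c.1, ?_, ?_⟩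
          · have := congrArg Fin.val h1
            rw [Fin.val_succ] at this
            simp only at this
            omega
          · have hcc : c = (c.1, j) := Prod.ext rfl h2.symm
            rw [← hcc]; exact hcsupp
        · right
          have ht : (c.1 : ℕ) = T := by
            have := congrArg Fin.val h1
            rw [Fin.coe_castSucc] at this
            simp only at this
            omega
          have hjv : (j : ℕ) = (c.2 : ℕ) ^^^ 2 ^ T := by
            have := congrArg Fin.val h2
            rw [xorIdx_val, ht] at this
            simpa using this
          refine ⟨c, hy, hcsupp, ht, Or.inr ⟨?_, ?_⟩⟩
          · rw [hjv, xor_cancel_right]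
          · rw [hjv, testBit_xor_pow]
            rw [ht] at hb
            simp [hb]
      · exact absurd hx (by simp)
    rcases key u₁ hadj1 he1 with h | ⟨c₁, hu₁, hc₁m, hc₁T, hcase₁⟩
    · exact h
    rcases key u₂ hadj2 he2 with h | ⟨c₂, hu₂, hc₂m, hc₂T, hcase₂⟩
    · exact h
    exfalso
    have hbit : ∀ c : PChk n, Sum.inr c ∈ w.support → (c.1 : ℕ) = T → c.2 = j →
        (j : ℕ).testBit T = false := by
      intro c hcm hcT hcj
      have := (chk c hcm hcT).1
      rwa [hcj] at this
    rcases hcase₁ with hc₁ | ⟨hc₁, hj₁⟩ <;> rcases hcase₂ with hc₂ | ⟨hc₂, hj₂⟩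
    · apply hne12
      rw [hu₁, hu₂]
      have : c₁ = c₂ := Prod.ext (Fin.ext (by rw [hc₁T, hc₂T])) (by rw [hc₁, hc₂])
      rw [this]
    · exact absurd (hbit c₁ hc₁m hc₁T hc₁) (by rw [hj₂]; simp)
    · exact absurd (hbit c₂ hc₂m hc₂T hc₂) (by rw [hj₁]; simp)
    · apply hne12
      rw [hu₁, hu₂]
      have : c₁ = c₂ := Prod.ext (Fin.ext (by rw [hc₁T, hc₂T])) (Fin.ext (by rw [hc₁, hc₂]))
      rw [this]
  -- there are at least two distinct stage-T checks on the cycle (parity)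
  obtain ⟨χ₁, χ₂, hχ12, hχ₁m, hχ₁T, hχ₂m, hχ₂T⟩ :
      ∃ χ₁ χ₂ : PChk n, χ₁ ≠ χ₂ ∧ Sum.inr χ₁ ∈ w.support ∧ (χ₁.1 : ℕ) = T ∧
        Sum.inr χ₂ ∈ w.support ∧ (χ₂.1 : ℕ) = T := by
    set fT : PVar n ⊕ PChk n → ZMod 2 :=
      Sum.elim (fun p : PVar n => if (p.2 : ℕ).testBit T then 1 else 0)
               (fun χ : PChk n => if (χ.2 : ℕ).testBit T then 1 else 0) with hfT
    have heven : 2 ∣ w.darts.countP (fun d => decide (fT d.toProd.1 ≠ fT d.toProd.2)) := by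
      have h0 := countP_change (G := tanner n) fT w
      rw [CharTwo.add_self_eq_zero] at h0
      exact (ZMod.natCast_eq_zero_iff _ 2).mp h0
    have hchange : ∀ d : (tanner n).Dart, fT d.toProd.1 ≠ fT d.toProd.2 → d ∈ w.darts →
        ∃ χ : PChk n, (χ.1 : ℕ) = T ∧ Sum.inr χ ∈ w.support ∧
          d.edge = s(Sum.inr χ, Sum.inl (χ.1.castSucc, xorIdx χ.1 χ.2)) := by
      intro d hf hd
      have hsupp1 : d.toProd.1 ∈ w.support := Walk.dart_fst_mem_support_of_mem_darts w hd
      have hsupp2 : d.toProd.2 ∈ w.support := Walk.dart_snd_mem_support_of_mem_darts w hd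
      have main : ∀ (p : PVar n) (c : PChk n), varCheckAdj n p c →
          fT (Sum.inl p) ≠ fT (Sum.inr c) → Sum.inr c ∈ w.support →
          (c.1 : ℕ) = T ∧ (Sum.inl p : PVar n ⊕ PChk n) = Sum.inl (c.1.castSucc, xorIdx c.1 c.2) := by
        intro p c hv hne hcm
        have hfeval : ∀ b1 b2 : Bool,
            (if b1 then (1 : ZMod 2) else 0) ≠ (if b2 then (1 : ZMod 2) else 0) → b1 ≠ b2 := by
          decide
        rcases vca_elim hv with ⟨h1, h2⟩ | ⟨h1, h2⟩ | ⟨hb, h1, h2⟩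
        · exact absurd (by rw [hfT]; simp only [Sum.elim_inl, Sum.elim_inr, h2]) hne
        · exact absurd (by rw [hfT]; simp only [Sum.elim_inl, Sum.elim_inr, h2]) hne
        · have hbb : (p.2 : ℕ).testBit T ≠ (c.2 : ℕ).testBit T := by
            apply hfeval
            revert hne; rw [hfT]; simp only [Sum.elim_inl, Sum.elim_inr]; exact id
          have hpv : (p.2 : ℕ) = (c.2 : ℕ) ^^^ 2 ^ (c.1 : ℕ) := by
            have := congrArg Fin.val h2
            rwa [xorIdx_val] at this
          have ht : (c.1 : ℕ) = T := by
            by_contra hne'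
            apply hbb
            rw [hpv, Nat.testBit_xor, Nat.testBit_two_pow]
            simp [hne']
          exact ⟨ht, congrArg _ (Prod.ext h1 h2)⟩
      have hedef : d.edge = s(d.toProd.1, d.toProd.2) := rfl
      rcases adj_cases d.adj with ⟨p, c, hx, hy, hv⟩ | ⟨p, c, hx, hy, hv⟩
      · obtain ⟨ht, hp'⟩ := main p c hv (by rw [← hx, ← hy]; exact hf)
          (by rw [← hy]; exact hsupp2)
        refine ⟨c, ht, by rw [← hy]; exact hsupp2, ?_⟩
        rw [hedef, hx, hy, hp', Sym2.eq_swap]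
      · obtain ⟨ht, hp'⟩ := main p c hv (by rw [← hx, ← hy]; exact hf.symm)
          (by rw [← hx]; exact hsupp1)
        refine ⟨c, ht, by rw [← hx]; exact hsupp1, ?_⟩
        rw [hedef, hx, hy, hp']
    have hedges_eq : w.edges = w.darts.map SimpleGraph.Dart.edge := rfl
    have hnodupE : w.edges.Nodup := hc.isCircuit.isTrail.edges_nodup
    have hnodupD : w.darts.Nodup := List.Nodup.of_map _ (by rw [← hedges_eq]; exact hnodupE)
    obtain ⟨hbm, _, _, hem⟩ := chk χm hχm hχmT
    obtain ⟨d₀, hd₀, hde₀⟩ : ∃ d ∈ w.darts,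
        SimpleGraph.Dart.edge d = s(Sum.inr χm, Sum.inl (χm.1.castSucc, xorIdx χm.1 χm.2)) := by
      rw [hedges_eq, List.mem_map] at hem
      exact hem
    have hP₀ : fT d₀.toProd.1 ≠ fT d₀.toProd.2 := by
      have h2 : s(d₀.toProd.1, d₀.toProd.2)
          = s(Sum.inr χm, Sum.inl (χm.1.castSucc, xorIdx χm.1 χm.2)) := hde₀
      have hfa : fT (Sum.inr χm) = 0 := by rw [hfT]; simp [hbm]
      have hfb : fT (Sum.inl ((χm.1.castSucc, xorIdx χm.1 χm.2) : PVar n)) = 1 := by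
        have hbit : ((xorIdx χm.1 χm.2 : Fin (2^n)) : ℕ).testBit T = true := by
          rw [xorIdx_val, hχmT, testBit_xor_pow, hbm]; rfl
        rw [hfT]; simp only [Sum.elim_inl]
        rw [show (((χm.1.castSucc, xorIdx χm.1 χm.2) : PVar n).2 : ℕ)
            = ((xorIdx χm.1 χm.2 : Fin (2^n)) : ℕ) from rfl, hbit]
        rfl
      rcases Sym2.eq_iff.mp h2 with ⟨ha, hb⟩ | ⟨ha, hb⟩ <;> rw [ha, hb, hfa, hfb] <;> decide
    have hpos : 0 < w.darts.countP (fun d => decide (fT d.toProd.1 ≠ fT d.toProd.2)) :=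
      List.countP_pos_iff.mpr ⟨d₀, hd₀, by simpa using hP₀⟩
    have h2le : 2 ≤ w.darts.countP (fun d => decide (fT d.toProd.1 ≠ fT d.toProd.2)) := by
      omega
    have hlen2 : 2 ≤ (w.darts.filter (fun d => decide (fT d.toProd.1 ≠ fT d.toProd.2))).length := by
      rw [← List.countP_eq_length_filter]
      exact h2le
    obtain ⟨d₁, d₂, rest, hld⟩ : ∃ d₁ d₂ rest,
        w.darts.filter (fun d => decide (fT d.toProd.1 ≠ fT d.toProd.2)) = d₁ :: d₂ :: rest := by
      rcases hl : w.darts.filter (fun d => decide (fT d.toProd.1 ≠ fT d.toProd.2))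
        with _ | ⟨d₁, _ | ⟨d₂, rest⟩⟩
      · rw [hl] at hlen2; simp at hlen2
      · rw [hl] at hlen2; simp at hlen2
      · exact ⟨d₁, d₂, rest, hl⟩
    have hmem₁ : d₁ ∈ w.darts ∧ fT d₁.toProd.1 ≠ fT d₁.toProd.2 := by
      have := List.mem_filter.mp (by rw [hld]; exact List.mem_cons_self)
      exact ⟨this.1, by simpa using this.2⟩
    have hmem₂ : d₂ ∈ w.darts ∧ fT d₂.toProd.1 ≠ fT d₂.toProd.2 := by
      have hdd : d₂ ∈ d₁ :: d₂ :: rest := List.mem_cons.mpr (Or.inr (List.mem_cons_self))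
      have := List.mem_filter.mp (by rw [hld]; exact hdd)
      exact ⟨this.1, by simpa using this.2⟩
    have hdne : d₁ ≠ d₂ := by
      have hnf : (d₁ :: d₂ :: rest).Nodup := by rw [← hld]; exact hnodupD.filter _
      intro h
      exact (List.nodup_cons.mp hnf).1 (by rw [h]; exact List.mem_cons_self)
    obtain ⟨χ₁, hχ₁T, hχ₁m, hde₁⟩ := hchange d₁ hmem₁.2 hmem₁.1
    obtain ⟨χ₂, hχ₂T, hχ₂m, hde₂⟩ := hchange d₂ hmem₂.2 hmem₂.1
    refine ⟨χ₁, χ₂, ?_, hχ₁m, hχ₁T, hχ₂m, hχ₂T⟩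
    intro h
    apply hdne
    apply List.inj_on_of_nodup_map (by rw [← hedges_eq]; exact hnodupE) hmem₁.1 hmem₂.1
    rw [hde₁, hde₂, h]
  -- collect the six distinct checks and contradict the length bound
  obtain ⟨hb₁, hv₁₁, hv₁₂, -⟩ := chk χ₁ hχ₁m hχ₁T
  obtain ⟨hb₂, hv₂₁, hv₂₂, -⟩ := chk χ₂ hχ₂m hχ₂T
  obtain ⟨t₁₁, ht₁₁, hm₁₁⟩ := var χ₁.1.castSucc χ₁.2 hv₁₁ (by rw [Fin.coe_castSucc]; exact hχ₁T)
  obtain ⟨t₁₂, ht₁₂, hm₁₂⟩ := var χ₁.1.castSucc (xorIdx χ₁.1 χ₁.2) hv₁₂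
    (by rw [Fin.coe_castSucc]; exact hχ₁T)
  obtain ⟨t₂₁, ht₂₁, hm₂₁⟩ := var χ₂.1.castSucc χ₂.2 hv₂₁ (by rw [Fin.coe_castSucc]; exact hχ₂T)
  obtain ⟨t₂₂, ht₂₂, hm₂₂⟩ := var χ₂.1.castSucc (xorIdx χ₂.1 χ₂.2) hv₂₂
    (by rw [Fin.coe_castSucc]; exact hχ₂T)
  -- numeric facts about the indices
  have hfst : χ₁.1 = χ₂.1 := Fin.ext (by rw [hχ₁T, hχ₂T])
  have hc12 : (χ₁.2 : ℕ) ≠ (χ₂.2 : ℕ) := by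
    intro h
    exact hχ12 (Prod.ext hfst (Fin.ext h))
  have hxv₁ : ((xorIdx χ₁.1 χ₁.2 : Fin (2^n)) : ℕ) = (χ₁.2 : ℕ) ^^^ 2 ^ T := by
    rw [xorIdx_val, hχ₁T]
  have hxv₂ : ((xorIdx χ₂.1 χ₂.2 : Fin (2^n)) : ℕ) = (χ₂.2 : ℕ) ^^^ 2 ^ T := by
    rw [xorIdx_val, hχ₂T]
  have hbx₁ : ((xorIdx χ₁.1 χ₁.2 : Fin (2^n)) : ℕ).testBit T = true := by
    rw [hxv₁, testBit_xor_pow, hb₁]; rfl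
  have hbx₂ : ((xorIdx χ₂.1 χ₂.2 : Fin (2^n)) : ℕ).testBit T = true := by
    rw [hxv₂, testBit_xor_pow, hb₂]; rfl
  have hxx : ((xorIdx χ₁.1 χ₁.2 : Fin (2^n)) : ℕ) ≠ ((xorIdx χ₂.1 χ₂.2 : Fin (2^n)) : ℕ) := by
    rw [hxv₁, hxv₂]
    intro h
    apply hc12
    have := congrArg (fun z => z ^^^ 2 ^ T) h
    simpa [xor_cancel_right] using this
  have hbne : ∀ {u v : ℕ}, u.testBit T = false → v.testBit T = true → u ≠ v := by
    intro u v h1 h2 h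
    rw [h, h2] at h1
    simp at h1
  have chkne : ∀ (t s : Fin n) (c d : Fin (2 ^ n)), ((t : ℕ) ≠ (s : ℕ) ∨ (c : ℕ) ≠ (d : ℕ)) →
      (Sum.inr (t, c) : PVar n ⊕ PChk n) ≠ Sum.inr (s, d) := by
    intro t s c d h heq
    have h2 := Prod.ext_iff.mp (Sum.inr.inj heq)
    rcases h with h | h
    · exact h (congrArg Fin.val h2.1)
    · exact h (congrArg Fin.val h2.2)
  have heta₁ : (Sum.inr χ₁ : PVar n ⊕ PChk n) = Sum.inr (χ₁.1, χ₁.2) := rfl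
  have heta₂ : (Sum.inr χ₂ : PVar n ⊕ PChk n) = Sum.inr (χ₂.1, χ₂.2) := rfl
  have n12 : (Sum.inr χ₁ : PVar n ⊕ PChk n) ≠ Sum.inr χ₂ := fun h => hχ12 (Sum.inr.inj h)
  have n13 : (Sum.inr χ₁ : PVar n ⊕ PChk n) ≠ Sum.inr (t₁₁, χ₁.2) := by
    rw [heta₁]; exact chkne _ _ _ _ (Or.inl (by omega))
  have n14 : (Sum.inr χ₁ : PVar n ⊕ PChk n) ≠ Sum.inr (t₁₂, xorIdx χ₁.1 χ₁.2) := by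
    rw [heta₁]; exact chkne _ _ _ _ (Or.inl (by omega))
  have n15 : (Sum.inr χ₁ : PVar n ⊕ PChk n) ≠ Sum.inr (t₂₁, χ₂.2) := by
    rw [heta₁]; exact chkne _ _ _ _ (Or.inl (by omega))
  have n16 : (Sum.inr χ₁ : PVar n ⊕ PChk n) ≠ Sum.inr (t₂₂, xorIdx χ₂.1 χ₂.2) := by
    rw [heta₁]; exact chkne _ _ _ _ (Or.inl (by omega))
  have n23 : (Sum.inr χ₂ : PVar n ⊕ PChk n) ≠ Sum.inr (t₁₁, χ₁.2) := by
    rw [heta₂]; exact chkne _ _ _ _ (Or.inl (by omega))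
  have n24 : (Sum.inr χ₂ : PVar n ⊕ PChk n) ≠ Sum.inr (t₁₂, xorIdx χ₁.1 χ₁.2) := by
    rw [heta₂]; exact chkne _ _ _ _ (Or.inl (by omega))
  have n25 : (Sum.inr χ₂ : PVar n ⊕ PChk n) ≠ Sum.inr (t₂₁, χ₂.2) := by
    rw [heta₂]; exact chkne _ _ _ _ (Or.inl (by omega))
  have n26 : (Sum.inr χ₂ : PVar n ⊕ PChk n) ≠ Sum.inr (t₂₂, xorIdx χ₂.1 χ₂.2) := by
    rw [heta₂]; exact chkne _ _ _ _ (Or.inl (by omega))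
  have n34 : (Sum.inr (t₁₁, χ₁.2) : PVar n ⊕ PChk n) ≠ Sum.inr (t₁₂, xorIdx χ₁.1 χ₁.2) :=
    chkne _ _ _ _ (Or.inr (hbne hb₁ hbx₁))
  have n35 : (Sum.inr (t₁₁, χ₁.2) : PVar n ⊕ PChk n) ≠ Sum.inr (t₂₁, χ₂.2) :=
    chkne _ _ _ _ (Or.inr hc12)
  have n36 : (Sum.inr (t₁₁, χ₁.2) : PVar n ⊕ PChk n) ≠ Sum.inr (t₂₂, xorIdx χ₂.1 χ₂.2) :=
    chkne _ _ _ _ (Or.inr (hbne hb₁ hbx₂))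
  have n45 : (Sum.inr (t₁₂, xorIdx χ₁.1 χ₁.2) : PVar n ⊕ PChk n) ≠ Sum.inr (t₂₁, χ₂.2) :=
    chkne _ _ _ _ (Or.inr (fun h => hbne hb₂ hbx₁ h.symm))
  have n46 : (Sum.inr (t₁₂, xorIdx χ₁.1 χ₁.2) : PVar n ⊕ PChk n) ≠ Sum.inr (t₂₂, xorIdx χ₂.1 χ₂.2) :=
    chkne _ _ _ _ (Or.inr hxx)
  have n56 : (Sum.inr (t₂₁, χ₂.2) : PVar n ⊕ PChk n) ≠ Sum.inr (t₂₂, xorIdx χ₂.1 χ₂.2) :=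
    chkne _ _ _ _ (Or.inr (hbne hb₂ hbx₂))
  -- membership of support in its tail (the walk is closed)
  have hmemtail : ∀ x, x ∈ w.support → x ∈ w.support.tail := by
    have hdne : w.darts ≠ [] := by
      intro h
      have h0 : w.length = 0 := by
        have := congrArg List.length h
        rwa [Walk.length_darts, List.length_nil] at this
      omega
    have hlast : a ∈ w.support.tail := by
      rw [← Walk.map_snd_darts]
      have hgl : (w.darts.getLast hdne).toProd.2 = a := by rw [Walk.getLast_darts_eq_lastDart]; rfl
      have hmm := List.mem_map_of_mem (f := fun d : (tanner n).Dart => d.toProd.2)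
        (List.getLast_mem hdne)
      simpa only [hgl] using hmm
    intro x hx
    rw [Walk.support_eq_cons] at hx
    rcases List.mem_cons.mp hx with rfl | hx
    · exact hlast
    · exact hx
  -- the six checks, all in the (nodup) tail of the support
  have hne6 : ([Sum.inr χ₁, Sum.inr χ₂, Sum.inr (t₁₁, χ₁.2), Sum.inr (t₁₂, xorIdx χ₁.1 χ₁.2),
      Sum.inr (t₂₁, χ₂.2), Sum.inr (t₂₂, xorIdx χ₂.1 χ₂.2)] :
      List (PVar n ⊕ PChk n)).Nodup := by
    simp [List.nodup_cons, n12, n13, n14, n15, n16, n23, n24, n25, n26, n34, n35, n36,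
      n45, n46, n56]
  have hsub : ([Sum.inr χ₁, Sum.inr χ₂, Sum.inr (t₁₁, χ₁.2), Sum.inr (t₁₂, xorIdx χ₁.1 χ₁.2),
      Sum.inr (t₂₁, χ₂.2), Sum.inr (t₂₂, xorIdx χ₂.1 χ₂.2)] :
      List (PVar n ⊕ PChk n)) ⊆ (w.support.tail).filter (fun x => x.isRight) := by
    intro x hx
    simp only [List.mem_cons, List.not_mem_nil, or_false] at hx
    rcases hx with rfl | rfl | rfl | rfl | rfl | rfl <;>
      refine List.mem_filter.mpr ⟨hmemtail _ ?_, by simp⟩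
    exacts [hχ₁m, hχ₂m, hm₁₁, hm₁₂, hm₂₁, hm₂₂]
  have h6 : 6 ≤ ((w.support.tail).filter (fun x => x.isRight)).length := by
    have := (List.subperm_of_subset hne6 hsub).length_le
    simpa using this
  have hcnt : ((w.support.tail).filter (fun x => x.isRight)).length
      = (w.support.tail).countP (fun x => x.isRight) :=
    List.countP_eq_length_filter.symm
  have hbound := count_right_le w
  have hsplit : (w.support).countP (fun x => x.isRight)
      = (w.support.tail).countP (fun x => x.isRight)
        + (if (Sum.isRight a) then 1 else 0) := by
    conv_lhs => rw [w.support_eq_cons]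
    rw [List.countP_cons]
  rw [hsplit] at hbound
  have hfin : 2 * ((w.support.tail).countP (fun x => x.isRight)) ≤ w.length + 1 := by
    cases hA : a.isRight <;> rw [hA] at hbound <;> simp at hbound <;> omega
  omega

instance {n : ℕ} (p : PVar n) (c : PChk n) : Decidable (varCheckAdj n p c) :=
  decidable_of_iff (p = (c.1.castSucc, c.2) ∨ p = (c.1.succ, c.2) ∨
    ((c.2 : ℕ).testBit (c.1 : ℕ) = false ∧ p = (c.1.castSucc, xorIdx c.1 c.2))) Iff.rfl

instance {n : ℕ} : DecidableRel (tanner n).Adj := fun x y =>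
  match x, y with
  | Sum.inl p, Sum.inr c => (inferInstance : Decidable (varCheckAdj n p c))
  | Sum.inr c, Sum.inl p => (inferInstance : Decidable (varCheckAdj n p c))
  | Sum.inl _, Sum.inl _ => isFalse (fun h => h)
  | Sum.inr _, Sum.inr _ => isFalse (fun h => h)

/-- Variable node of `tanner 3`. -/
def V3 (s j : ℕ) (hs : s < 3 + 1) (hj : j < 2 ^ 3) : PVar 3 ⊕ PChk 3 := Sum.inl (⟨s, hs⟩, ⟨j, hj⟩)
/-- Check node of `tanner 3`. -/
def C3 (t j : ℕ) (ht : t < 3) (hj : j < 2 ^ 3) : PVar 3 ⊕ PChk 3 := Sum.inr (⟨t, ht⟩, ⟨j, hj⟩)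

/-- An explicit 12-cycle in `tanner 3`. -/
def cyc12 : (tanner 3).Walk (V3 1 0 (by norm_num) (by norm_num)) (V3 1 0 (by norm_num) (by norm_num)) :=
  .cons (by decide : (tanner 3).Adj (V3 1 0 (by norm_num) (by norm_num)) (C3 0 0 (by norm_num) (by norm_num)))
  (.cons (by decide : (tanner 3).Adj (C3 0 0 (by norm_num) (by norm_num)) (V3 0 1 (by norm_num) (by norm_num)))
  (.cons (by decide : (tanner 3).Adj (V3 0 1 (by norm_num) (by norm_num)) (C3 0 1 (by norm_num) (by norm_num)))
  (.cons (by decide : (tanner 3).Adj (C3 0 1 (by norm_num) (by norm_num)) (V3 1 1 (by norm_num) (by norm_num)))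
  (.cons (by decide : (tanner 3).Adj (V3 1 1 (by norm_num) (by norm_num)) (C3 1 1 (by norm_num) (by norm_num)))
  (.cons (by decide : (tanner 3).Adj (C3 1 1 (by norm_num) (by norm_num)) (V3 1 3 (by norm_num) (by norm_num)))
  (.cons (by decide : (tanner 3).Adj (V3 1 3 (by norm_num) (by norm_num)) (C3 0 3 (by norm_num) (by norm_num)))
  (.cons (by decide : (tanner 3).Adj (C3 0 3 (by norm_num) (by norm_num)) (V3 0 3 (by norm_num) (by norm_num)))
  (.cons (by decide : (tanner 3).Adj (V3 0 3 (by norm_num) (by norm_num)) (C3 0 2 (by norm_num) (by norm_num)))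
  (.cons (by decide : (tanner 3).Adj (C3 0 2 (by norm_num) (by norm_num)) (V3 1 2 (by norm_num) (by norm_num)))
  (.cons (by decide : (tanner 3).Adj (V3 1 2 (by norm_num) (by norm_num)) (C3 1 0 (by norm_num) (by norm_num)))
  (.cons (by decide : (tanner 3).Adj (C3 1 0 (by norm_num) (by norm_num)) (V3 1 0 (by norm_num) (by norm_num)))
  .nil)))))))))))

lemma cyc12_isCycle : cyc12.IsCycle :=
  ⟨⟨⟨by decide⟩, by simp [cyc12]⟩, by decide⟩

/-- The canonical embedding of `tanner 3` into `tanner n` for `3 ≤ n`. -/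
def castVC {n : ℕ} (hn : 3 ≤ n) : PVar 3 ⊕ PChk 3 → PVar n ⊕ PChk n :=
  Sum.map
    (fun p => (⟨p.1, by have := p.1.isLt; omega⟩,
               ⟨p.2, lt_of_lt_of_le p.2.isLt (Nat.pow_le_pow_right (by norm_num) hn)⟩))
    (fun c => (⟨c.1, by have := c.1.isLt; omega⟩,
               ⟨c.2, lt_of_lt_of_le c.2.isLt (Nat.pow_le_pow_right (by norm_num) hn)⟩))

lemma castVC_inj {n : ℕ} (hn : 3 ≤ n) : Function.Injective (castVC hn) := by
  intro x y h
  cases x <;> cases y <;> simp [castVC] at h ⊢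
  · obtain ⟨h1, h2⟩ := h
    exact Prod.ext (Fin.ext h1) (Fin.ext h2)
  · obtain ⟨h1, h2⟩ := h
    exact Prod.ext (Fin.ext h1) (Fin.ext h2)

lemma vca_cast {n : ℕ} (hn : 3 ≤ n) {p : PVar 3} {c : PChk 3} (h : varCheckAdj 3 p c) :
    varCheckAdj n
      (⟨p.1, by have := p.1.isLt; omega⟩,
       ⟨p.2, lt_of_lt_of_le p.2.isLt (Nat.pow_le_pow_right (by norm_num) hn)⟩)
      (⟨c.1, by have := c.1.isLt; omega⟩,
       ⟨c.2, lt_of_lt_of_le c.2.isLt (Nat.pow_le_pow_right (by norm_num) hn)⟩) := by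
  rcases h with h | h | ⟨hb, h⟩
  · subst h
    exact Or.inl (by apply Prod.ext <;> apply Fin.ext <;> simp)
  · subst h
    exact Or.inr (Or.inl (by apply Prod.ext <;> apply Fin.ext <;> simp))
  · subst h
    exact Or.inr (Or.inr ⟨hb, by apply Prod.ext <;> apply Fin.ext <;> simp [xorIdx]⟩)

/-- The embedding as a graph homomorphism. -/
def tannerHom {n : ℕ} (hn : 3 ≤ n) : tanner 3 →g tanner n where
  toFun := castVC hn
  map_rel' := by
    intro x y h
    cases x <;> cases y <;> simp only [castVC, Sum.map_inl, Sum.map_inr]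
    · exact (h : False).elim
    · exact vca_cast hn h
    · exact vca_cast hn h
    · exact (h : False).elim

lemma tanner_not_acyclic {n : ℕ} (hn : 3 ≤ n) : ¬ (tanner n).IsAcyclic := by
  intro hac
  exact hac _ (cyc12_isCycle.map (f := tannerHom hn) (castVC_inj hn))

/-- Any polar code of length `8` or more (`N = 2^n`, `n ≥ 3`) has girth at
least `12`. -/
theorem polar_girth (n : ℕ) (hn : 3 ≤ n) : 12 ≤ (tanner n).girth := by
  obtain ⟨a, w, hw, hg⟩ := SimpleGraph.exists_girth_eq_length.mpr (tanner_not_acyclic hn)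
  rw [hg]
  exact no_short_cycle hw
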